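/- Let G be a group, E ⊆ G, g, h ∈ G, and a ≠ b ∈ E with gE = E \ {a} and hE = E \ {b}. Then for every element γ in the subsemigroup (without identity) generated by {g, h}, the set γE is properly contained in E. -/

import Mathlib

/-- If E is a (g,h)-weak Sierpiński subset, then for every γ in the non-unital
subsemigroup generated by {g,h}, γE is properly contained in E. -/
theorem wS_semigroup_image_ssubset (G : Type*) [Group G] (g h : G) (E : Set G)
    (a b : G) (ha : a ∈ E) (hb : b ∈ E) (hab : a ≠ b)
    (hgE : (g * ·) '' E = E \ {a}) (hhE : (h * ·) '' E = E \ {b}) :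
    ∀ γ ∈ Subsemigroup.closure ({g, h} : Set G), (γ * ·) '' E ⊂ E := by
  intro γ hγ
  induction hγ using Subsemigroup.closure_induction with
  | mem x hx =>
    rcases hx with rfl | rfl
    · rw [hgE]
      exact Set.sdiff_singleton_ssubset.mpr ha
    · rw [hhE]
      exact Set.sdiff_singleton_ssubset.mpr hb
  | mul x y hx hy ihx ihy =>
    have key : ((x * y) * ·) '' E = (x * ·) '' ((y * ·) '' E) := by
      rw [← Set.image_comp]
      simp [Function.comp, mul_assoc]
    rw [key]
    exact lt_of_le_of_lt (Set.image_mono ihy.subset) ihx
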